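/- (Ransford–White) Let G : Ω_n → Ω_n be holomorphic with G(0) = 0. Then r(G(X)) ≤ r(X) for all X ∈ Ω_n. -/

import Mathlib

open Metric Set Filter Topology

/-! ### Auxiliary lemmas using the `L∞` operator norm on matrices -/

section LinftyHelpers

attribute [local instance] Matrix.linftyOpNormedRing Matrix.linftyOpNormedAlgebra

variable {n : ℕ}

lemma RW.entry_le_linfty (A : Matrix (Fin n) (Fin n) ℂ) (i j : Fin n) : ‖A i j‖ ≤ ‖A‖ := by
  rw [Matrix.linfty_opNorm_def]
  have h : ‖A i j‖₊ ≤ (Finset.univ : Finset (Fin n)).sup fun i => ∑ j', ‖A i j'‖₊ :=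
    le_trans (Finset.single_le_sum (f := fun j' => ‖A i j'‖₊) (fun _ _ => zero_le)
      (Finset.mem_univ j)) (Finset.le_sup (f := fun i => ∑ j', ‖A i j'‖₊) (Finset.mem_univ i))
  exact_mod_cast h

lemma RW.specNormLe (hn : 0 < n) (A : Matrix (Fin n) (Fin n) ℂ) {μ : ℂ}
    (hμ : μ ∈ spectrum ℂ A) {c : ℝ} (hc : ∀ i j, ‖A i j‖ ≤ c) : ‖μ‖ ≤ n * c := by
  haveI : Nonempty (Fin n) := ⟨⟨0, hn⟩⟩
  have h0 : (0 : ℝ) ≤ c := le_trans (norm_nonneg _) (hc ⟨0, hn⟩ ⟨0, hn⟩)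
  have h1 : ‖μ‖ ≤ ‖A‖ := spectrum.norm_le_norm_of_mem hμ
  refine h1.trans ?_
  rw [Matrix.linfty_opNorm_def]
  have hsup : ((Finset.univ : Finset (Fin n)).sup fun i => ∑ j, ‖A i j‖₊) ≤
      (n * c.toNNReal : NNReal) := by
    refine Finset.sup_le fun i _ => ?_
    calc ∑ j, ‖A i j‖₊ ≤ (Finset.univ : Finset (Fin n)).card • c.toNNReal := by
          refine Finset.sum_le_card_nsmul _ _ _ fun j _ => ?_
          rw [← norm_toNNReal]
          exact Real.toNNReal_le_toNNReal (hc i j)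
      _ = n * c.toNNReal := by simp [nsmul_eq_mul]
  have : (((Finset.univ : Finset (Fin n)).sup fun i => ∑ j, ‖A i j‖₊ : NNReal) : ℝ) ≤
      ((n * c.toNNReal : NNReal) : ℝ) := NNReal.coe_le_coe.mpr hsup
  refine this.trans ?_
  push_cast
  rw [Real.coe_toNNReal _ h0]

lemma RW.specPowSmall (hn : 0 < n) (A : Matrix (Fin n) (Fin n) ℂ)
    (h : ∀ μ ∈ spectrum ℂ A, ‖μ‖ < 1) {ε : ℝ} (hε : 0 < ε) :
    ∃ k, 0 < k ∧ ∀ i j, ‖(A ^ k) i j‖ < ε := by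
  haveI : Nonempty (Fin n) := ⟨⟨0, hn⟩⟩
  haveI : CompleteSpace (Matrix (Fin n) (Fin n) ℂ) := FiniteDimensional.complete ℂ _
  have hr : spectralRadius ℂ A < 1 := by
    have := spectrum.spectralRadius_lt_of_forall_lt (a := A) (r := 1)
      (fun z hz => by exact_mod_cast h z hz)
    simpa using this
  have T := spectrum.pow_norm_pow_one_div_tendsto_nhds_spectralRadius A
  have ev : ∀ᶠ k : ℕ in atTop, ENNReal.ofReal (‖A ^ k‖ ^ (1 / (k : ℝ))) < 1 :=
    T.eventually_lt_const hr
  obtain ⟨k₀, hk₀lt, hk₀1⟩ := (ev.and (eventually_ge_atTop 1)).exists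
  have hk₀pos : 0 < k₀ := hk₀1
  have hA : ‖A ^ k₀‖ < 1 := by
    by_contra hA
    push_neg at hA
    have h1 : (1 : ℝ) ≤ ‖A ^ k₀‖ ^ (1 / (k₀ : ℝ)) := by
      calc (1 : ℝ) = (1 : ℝ) ^ (1 / (k₀ : ℝ)) := (Real.one_rpow _).symm
        _ ≤ ‖A ^ k₀‖ ^ (1 / (k₀ : ℝ)) :=
          Real.rpow_le_rpow zero_le_one hA (by positivity)
    have := ENNReal.ofReal_lt_one.mp hk₀lt
    linarith
  obtain ⟨m, hm⟩ := exists_pow_lt_of_lt_one hε hA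
  refine ⟨k₀ * (m + 1), Nat.mul_pos hk₀pos (Nat.succ_pos m), fun i j => ?_⟩
  have hb0 : (0 : ℝ) ≤ ‖A ^ k₀‖ := norm_nonneg _
  calc ‖(A ^ (k₀ * (m + 1))) i j‖ ≤ ‖A ^ (k₀ * (m + 1))‖ := RW.entry_le_linfty _ i j
    _ = ‖(A ^ k₀) ^ (m + 1)‖ := by rw [pow_mul]
    _ ≤ ‖A ^ k₀‖ ^ (m + 1) := norm_pow_le' _ (Nat.succ_pos m)
    _ = ‖A ^ k₀‖ ^ m * ‖A ^ k₀‖ := pow_succ _ _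
    _ ≤ ‖A ^ k₀‖ ^ m := mul_le_of_le_one_right (pow_nonneg hb0 m) hA.le
    _ < ε := hm

end LinftyHelpers

attribute [local instance] Matrix.normedAddCommGroup Matrix.normedSpace

/-- The spectral radius of a complex `n × n` matrix. -/
noncomputable def sRad {n : ℕ} (A : Matrix (Fin n) (Fin n) ℂ) : ℝ :=
  sSup ((fun μ => ‖μ‖) '' spectrum ℂ A)

/-- The spectral unit ball `Ω_n`. -/
def specBall (n : ℕ) : Set (Matrix (Fin n) (Fin n) ℂ) := {W | sRad W < 1}

namespace RW

variable {n : ℕ}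

/-- Matrix multiplication as a continuous bilinear map (entrywise sup norm, finite dims). -/
noncomputable def mulL (n : ℕ) :
    Matrix (Fin n) (Fin n) ℂ →L[ℂ] Matrix (Fin n) (Fin n) ℂ →L[ℂ] Matrix (Fin n) (Fin n) ℂ :=
  LinearMap.toContinuousLinearMap
  { toFun := fun A => LinearMap.toContinuousLinearMap (LinearMap.mulLeft ℂ A)
    map_add' := fun A B => by ext C; simp [add_mul]
    map_smul' := fun c A => by ext C; simp [smul_mul_assoc] }

@[simp] lemma mulL_apply (A B : Matrix (Fin n) (Fin n) ℂ) : mulL n A B = A * B := by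
  simp [mulL]

lemma DifferentiableOn.matMul {f g : ℂ → Matrix (Fin n) (Fin n) ℂ} {U : Set ℂ}
    (hf : DifferentiableOn ℂ f U) (hg : DifferentiableOn ℂ g U) :
    DifferentiableOn ℂ (fun z => f z * g z) U := by
  have hfe : ∀ i l, DifferentiableOn ℂ (fun z => f z i l) U := fun i l =>
    differentiableOn_pi.mp (differentiableOn_pi.mp hf i) l
  have hge : ∀ i l, DifferentiableOn ℂ (fun z => g z i l) U := fun i l =>
    differentiableOn_pi.mp (differentiableOn_pi.mp hg i) l
  refine differentiableOn_pi.mpr fun i => differentiableOn_pi.mpr fun j => ?_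
  simp only [Matrix.mul_apply]
  exact DifferentiableOn.fun_sum fun l _ => (hfe i l).mul (hge l j)

lemma matPow {f : ℂ → Matrix (Fin n) (Fin n) ℂ} {U : Set ℂ}
    (hf : DifferentiableOn ℂ f U) :
    ∀ k : ℕ, DifferentiableOn ℂ (fun z => (f z) ^ k) U := by
  intro k
  induction k with
  | zero => simpa using differentiableOn_const (1 : Matrix (Fin n) (Fin n) ℂ)
  | succ k ih => simpa [pow_succ] using DifferentiableOn.matMul ih hf

lemma matNormMul (A B : Matrix (Fin n) (Fin n) ℂ) : ‖A * B‖ ≤ n * ‖A‖ * ‖B‖ := by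
  refine (Matrix.norm_le_iff (by positivity)).mpr fun i j => ?_
  calc ‖(A * B) i j‖ = ‖∑ l, A i l * B l j‖ := by rw [Matrix.mul_apply]
    _ ≤ ∑ l, ‖A i l * B l j‖ := norm_sum_le _ _
    _ ≤ ∑ _l : Fin n, ‖A‖ * ‖B‖ := by
        refine Finset.sum_le_sum fun l _ => ?_
        rw [norm_mul]
        exact mul_le_mul (Matrix.norm_entry_le_entrywise_sup_norm A)
          (Matrix.norm_entry_le_entrywise_sup_norm B) (norm_nonneg _) (norm_nonneg _)
    _ = n * ‖A‖ * ‖B‖ := by simp [Finset.sum_const, mul_assoc]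

lemma nuMul (A B : Matrix (Fin n) (Fin n) ℂ) :
    (n : ℝ) * ‖A * B‖ ≤ ((n : ℝ) * ‖A‖) * ((n : ℝ) * ‖B‖) := by
  have := matNormMul A B
  have hn0 : (0 : ℝ) ≤ (n : ℝ) := Nat.cast_nonneg n
  nlinarith [norm_nonneg (A * B), norm_nonneg A, norm_nonneg B]

lemma nuPow (A : Matrix (Fin n) (Fin n) ℂ) :
    ∀ k : ℕ, 1 ≤ k → (n : ℝ) * ‖A ^ k‖ ≤ ((n : ℝ) * ‖A‖) ^ k := by
  intro k hk
  induction k with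
  | zero => omega
  | succ k ih =>
    rcases Nat.eq_zero_or_pos k with rfl | hkpos
    · simpa using le_refl ((n : ℝ) * ‖A‖)
    · calc (n : ℝ) * ‖A ^ (k + 1)‖ = (n : ℝ) * ‖A ^ k * A‖ := by rw [pow_succ]
        _ ≤ ((n : ℝ) * ‖A ^ k‖) * ((n : ℝ) * ‖A‖) := nuMul _ _
        _ ≤ ((n : ℝ) * ‖A‖) ^ k * ((n : ℝ) * ‖A‖) := by
            refine mul_le_mul_of_nonneg_right (ih hkpos) (by positivity)
        _ = ((n : ℝ) * ‖A‖) ^ (k + 1) := (pow_succ _ _).symm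

lemma sRad_nonneg (A : Matrix (Fin n) (Fin n) ℂ) : 0 ≤ sRad A :=
  Real.sSup_nonneg (by rintro x ⟨μ, _, rfl⟩; exact norm_nonneg μ)

lemma norm_le_sRad {A : Matrix (Fin n) (Fin n) ℂ} {μ : ℂ} (hμ : μ ∈ spectrum ℂ A) :
    ‖μ‖ ≤ sRad A :=
  le_csSup ((A.finite_spectrum.image _).bddAbove) ⟨μ, hμ, rfl⟩

lemma sRad_le {A : Matrix (Fin n) (Fin n) ℂ} {c : ℝ} (hc : 0 ≤ c)
    (h : ∀ μ ∈ spectrum ℂ A, ‖μ‖ ≤ c) : sRad A ≤ c :=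
  Real.sSup_le (by rintro x ⟨μ, hμ, rfl⟩; exact h μ hμ) hc

lemma spec_zero_matrix : ∀ (A : Matrix (Fin 0) (Fin 0) ℂ), spectrum ℂ A = ∅ := by
  haveI : Subsingleton (Matrix (Fin 0) (Fin 0) ℂ) :=
    ⟨fun A B => by ext i j; exact i.elim0⟩
  intro A
  exact Set.eq_empty_iff_forall_notMem.mpr fun z hz =>
    (spectrum.mem_iff.mp hz) (isUnit_of_subsingleton _)

lemma smul_mem_specBall {X : Matrix (Fin n) (Fin n) ℂ} (z : ℂ)
    (h : ‖z‖ * sRad X < 1) : z • X ∈ specBall n := by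
  have hle : sRad (z • X) ≤ ‖z‖ * sRad X := by
    refine sRad_le (mul_nonneg (norm_nonneg _) (sRad_nonneg _)) ?_
    intro μ hμ
    rcases eq_or_ne z 0 with rfl | hz
    · rw [zero_smul] at hμ
      rcases Nat.eq_zero_or_pos n with rfl | hn
      · simp [spec_zero_matrix] at hμ
      · haveI : Nonempty (Fin n) := ⟨⟨0, hn⟩⟩
        rw [spectrum.zero_eq] at hμ
        simp only [Set.mem_singleton_iff] at hμ
        subst hμ
        simp [mul_nonneg (norm_nonneg (0:ℂ)) (sRad_nonneg X)]
    · have hsm : z • X = (Units.mk0 z hz) • X := rfl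
      rw [hsm, spectrum.unit_smul_eq_smul] at hμ
      obtain ⟨ν, hν, rfl⟩ := hμ
      simp only [Units.smul_def, Units.val_mk0, smul_eq_mul, norm_mul]
      exact mul_le_mul_of_nonneg_left (norm_le_sRad hν) (norm_nonneg z)
  exact lt_of_le_of_lt hle h

end RW

/-- (Ransford–White) If `G : Ω_n → Ω_n` is holomorphic with `G(0) = 0`, then
`r(G(X)) ≤ r(X)` for all `X ∈ Ω_n`. -/
theorem stmt17 {n : ℕ} (G : Matrix (Fin n) (Fin n) ℂ → Matrix (Fin n) (Fin n) ℂ)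
    (hol : DifferentiableOn ℂ G (specBall n))
    (hmap : Set.MapsTo G (specBall n) (specBall n))
    (h0 : G 0 = 0) :
    ∀ X ∈ specBall n, sRad (G X) ≤ sRad X := by
  rcases Nat.eq_zero_or_pos n with rfl | hn
  · intro X _
    simp [sRad, RW.spec_zero_matrix, Real.sSup_empty, RW.sRad_nonneg]
  intro X hX
  have hρ0 : 0 ≤ sRad X := RW.sRad_nonneg X
  have hρ1 : sRad X < 1 := hX
  -- main claim: for each eigenvalue μ of G X and each admissible s, ‖μ‖ ≤ 1/s
  have claim : ∀ μ ∈ spectrum ℂ (G X), ∀ s : ℝ, 1 < s → s * sRad X < 1 → ‖μ‖ * s ≤ 1 := by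
    intro μ hμ s hs1 hsρ
    have hs0 : (0 : ℝ) < s := lt_trans one_pos hs1
    set K : Set ℂ := closedBall (0 : ℂ) s with hK
    -- the map λ ↦ λ • X sends K into the spectral ball
    have hmem : ∀ z : ℂ, z ∈ K → z • X ∈ specBall n := by
      intro z hz
      refine RW.smul_mem_specBall z ?_
      rcases eq_or_lt_of_le hρ0 with hρ | hρ
      · rw [← hρ]; simpa using one_pos
      · have hz' : ‖z‖ ≤ s := by simpa [hK] using mem_closedBall_iff_norm.mp hz
        calc ‖z‖ * sRad X ≤ s * sRad X := mul_le_mul_of_nonneg_right hz' hρ0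
          _ < 1 := hsρ
    set g : ℂ → Matrix (Fin n) (Fin n) ℂ := fun z => G (z • X) with hg
    have hgd : DifferentiableOn ℂ g K := by
      refine DifferentiableOn.comp hol ?_ hmem
      exact (Differentiable.smul_const differentiable_id X).differentiableOn
    have hg0 : g 0 = 0 := by simp [hg, h0]
    -- uniform bound on powers over K
    have hKc : IsCompact K := isCompact_closedBall _ _
    obtain ⟨B0, hB0⟩ := hKc.exists_bound_of_continuousOn hgd.continuousOn
    set B : ℝ := max ((n : ℝ) * B0) 1 with hB
    have hB1 : (1 : ℝ) ≤ B := le_max_right _ _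
    have hBg : ∀ z ∈ K, (n : ℝ) * ‖g z‖ ≤ B := by
      intro z hz
      refine le_trans ?_ (le_max_left _ _)
      exact mul_le_mul_of_nonneg_left (hB0 z hz) (Nat.cast_nonneg n)
    -- pointwise: some power is small, with relatively open neighborhoods
    have cov : ∀ x ∈ K, ∃ (U : Set ℂ) (k : ℕ), IsOpen U ∧ x ∈ U ∧ 0 < k ∧
        ∀ z ∈ U ∩ K, (n : ℝ) * ‖(g z) ^ k‖ ≤ 1 / 2 := by
      intro x hx
      have hspec : ∀ ν ∈ spectrum ℂ (g x), ‖ν‖ < 1 := fun ν hν =>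
        lt_of_le_of_lt (RW.norm_le_sRad hν) (hmap (hmem x hx))
      have hε : (0 : ℝ) < 1 / (2 * ((n : ℝ) + 1) * ((n : ℝ) + 1)) := by positivity
      obtain ⟨k, hkpos, hke⟩ := RW.specPowSmall hn (g x) hspec hε
      have hgxk : (n : ℝ) * ‖(g x) ^ k‖ < 1 / 2 := by
        have hnorm : ‖(g x) ^ k‖ ≤ 1 / (2 * ((n : ℝ) + 1) * ((n : ℝ) + 1)) :=
          (Matrix.norm_le_iff hε.le).mpr fun i j => (hke i j).le
        have hnn : (n : ℝ) ≥ 0 := Nat.cast_nonneg n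
        have h2 : (n : ℝ) * ‖(g x) ^ k‖ ≤
            (n : ℝ) * (1 / (2 * ((n : ℝ) + 1) * ((n : ℝ) + 1))) :=
          mul_le_mul_of_nonneg_left hnorm hnn
        refine lt_of_le_of_lt h2 ?_
        have hD : (0 : ℝ) < 2 * ((n : ℝ) + 1) * ((n : ℝ) + 1) := by positivity
        rw [mul_one_div, div_lt_div_iff₀ hD (by norm_num)]
        nlinarith [sq_nonneg ((n : ℝ))]
      -- continuity gives a neighborhood
      have hcont : ContinuousOn (fun z => (n : ℝ) * ‖(g z) ^ k‖) K :=
        (continuous_const.mul continuous_norm).comp_continuousOn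
          ((RW.matPow hgd k).continuousOn)
      have hev : ∀ᶠ z in 𝓝[K] x, (n : ℝ) * ‖(g z) ^ k‖ < 1 / 2 :=
        (hcont x hx).eventually_lt_const hgxk
      obtain ⟨U, hUopen, hxU, hU⟩ := mem_nhdsWithin.mp hev
      exact ⟨U, k, hUopen, hxU, hkpos, fun z hz => (hU ⟨hz.1, hz.2⟩).le⟩
    choose! U kk hUopen hxU hkpos hbound using cov
    obtain ⟨t, htK, htcov⟩ := hKc.elim_nhds_subcover U
      (fun x hx => (hUopen x hx).mem_nhds (hxU x hx))
    set kmax : ℕ := t.sup kk with hkmax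
    set C : ℝ := B ^ kmax + n with hC
    have hCpos : (0 : ℝ) < C := by
      have : (0 : ℝ) < B ^ kmax := by positivity
      have : (0 : ℝ) < (n : ℝ) := by exact_mod_cast hn
      positivity
    -- uniform bound on all powers
    have hunif : ∀ z ∈ K, ∀ k : ℕ, (n : ℝ) * ‖(g z) ^ k‖ ≤ (n : ℝ) * C := by
      intro z hz k
      obtain ⟨x, hxt, hzU⟩ := by
        have := htcov hz
        simpa using this
      have hxK : x ∈ K := htK x hxt
      have hk₀pos : 0 < kk x := hkpos x hxK
      have hk₀le : kk x ≤ kmax := Finset.le_sup hxt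
      have hbd : (n : ℝ) * ‖(g z) ^ (kk x)‖ ≤ 1 / 2 := hbound x hxK z ⟨hzU, hz⟩
      have hn1 : (1 : ℝ) ≤ (n : ℝ) := by exact_mod_cast hn
      induction k using Nat.strong_induction_on with
      | _ k IH =>
        rcases le_or_gt k kmax with hk | hk
        · rcases Nat.eq_zero_or_pos k with rfl | hkp
          · rw [pow_zero]
            have hone : ‖(1 : Matrix (Fin n) (Fin n) ℂ)‖ ≤ 1 :=
              (Matrix.norm_le_iff zero_le_one).mpr fun i j => by
                rcases eq_or_ne i j with rfl | hij
                · simp [Matrix.one_apply_eq]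
                · simp [Matrix.one_apply_ne hij]
            have h1 : (1 : ℝ) ≤ B ^ kmax := by
              simpa using pow_le_pow_right₀ hB1 (Nat.zero_le kmax)
            have hnm : (0 : ℝ) ≤ (n : ℝ) := Nat.cast_nonneg n
            nlinarith [hone, h1, hn1]
          · calc (n : ℝ) * ‖(g z) ^ k‖ ≤ ((n : ℝ) * ‖g z‖) ^ k := RW.nuPow _ k hkp
              _ ≤ B ^ k := pow_le_pow_left₀ (by positivity) (hBg z hz) k
              _ ≤ B ^ kmax := pow_le_pow_right₀ hB1 hk
              _ ≤ (n : ℝ) * C := by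
                  have hBk : (0:ℝ) ≤ B ^ kmax := by positivity
                  rw [hC]; nlinarith
        · have hksub : k - kk x < k := Nat.sub_lt (lt_of_le_of_lt (Nat.zero_le _)
            (lt_of_le_of_lt hk₀le hk)) hk₀pos
          have hIH := IH (k - kk x) hksub
          have hsplit : (g z) ^ k = (g z) ^ (kk x) * (g z) ^ (k - kk x) := by
            rw [← pow_add]
            congr 1
            omega
          calc (n : ℝ) * ‖(g z) ^ k‖
              = (n : ℝ) * ‖(g z) ^ (kk x) * (g z) ^ (k - kk x)‖ := by rw [hsplit]
            _ ≤ ((n : ℝ) * ‖(g z) ^ (kk x)‖) * ((n : ℝ) * ‖(g z) ^ (k - kk x)‖) :=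
                RW.nuMul _ _
            _ ≤ (1 / 2) * ((n : ℝ) * C) := by
                refine mul_le_mul hbd hIH (by positivity) (by norm_num)
            _ ≤ (n : ℝ) * C := by
                have hpos : (0 : ℝ) ≤ (n : ℝ) * C := by positivity
                nlinarith [hpos]
    have hCk : ∀ z ∈ K, ∀ k : ℕ, ‖(g z) ^ k‖ ≤ C := by
      intro z hz k
      have h1 := hunif z hz k
      have hn1 : (1 : ℝ) ≤ (n : ℝ) := by exact_mod_cast hn
      nlinarith [norm_nonneg ((g z) ^ k)]
    -- maximum principle for (dslope g 0)^k on the ball of radius s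
    have hdsd : DifferentiableOn ℂ (dslope g 0) K := by
      refine (Complex.differentiableOn_dslope ?_).mpr hgd
      exact closedBall_mem_nhds 0 hs0
    have key : ∀ k : ℕ, ‖(G X) ^ k‖ ≤ C / s ^ k := by
      intro k
      have hpd : DifferentiableOn ℂ (fun z => (dslope g 0 z) ^ k) K := RW.matPow hdsd k
      have hdc : DiffContOnCl ℂ (fun z => (dslope g 0 z) ^ k) (ball (0 : ℂ) s) := by
        refine DifferentiableOn.diffContOnCl ?_
        rw [closure_ball (0 : ℂ) hs0.ne']
        exact hpd
      have hfront : ∀ z ∈ frontier (ball (0 : ℂ) s), ‖(dslope g 0 z) ^ k‖ ≤ C / s ^ k := by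
        intro z hzf
        rw [frontier_ball (0 : ℂ) hs0.ne'] at hzf
        have hzs : ‖z‖ = s := by simpa using mem_sphere_iff_norm.mp hzf
        have hz0 : z ≠ 0 := by
          intro h; rw [h] at hzs; simp at hzs; exact hs0.ne' hzs.symm
        have hzK : z ∈ K := by
          simp [hK, mem_closedBall_iff_norm, hzs]
        have hds : dslope g 0 z = z⁻¹ • g z := by
          rw [dslope_of_ne _ hz0, slope_def_module, hg0]
          simp
        rw [hds, smul_pow, norm_smul, norm_pow, norm_inv, hzs]
        rw [div_eq_mul_inv, mul_comm, inv_pow]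
        exact mul_le_mul_of_nonneg_right (hCk z hzK k) (by positivity)
      have h1m : (1 : ℂ) ∈ closure (ball (0 : ℂ) s) := by
        rw [closure_ball (0 : ℂ) hs0.ne']
        simp [mem_closedBall_iff_norm, hs1.le]
      have := Complex.norm_le_of_forall_mem_frontier_norm_le isBounded_ball hdc hfront h1m
      have hds1 : dslope g 0 1 = G X := by
        rw [dslope_of_ne _ one_ne_zero, slope_def_module, hg0]
        simp [hg]
      rwa [hds1] at this
    -- eigenvalue bound
    by_contra hcon
    push_neg at hcon
    obtain ⟨k, hk⟩ := pow_unbounded_of_one_lt ((n : ℝ) * C) hcon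
    have hk' : (n : ℝ) * C < (‖μ‖ * s) ^ (k + 1) := by
      refine lt_of_lt_of_le hk ?_
      exact pow_le_pow_right₀ hcon.le (Nat.le_succ k)
    have hμk : μ ^ (k + 1) ∈ spectrum ℂ ((G X) ^ (k + 1)) :=
      spectrum.pow_image_subset (G X) (k + 1) ⟨μ, hμ, rfl⟩
    have hent : ∀ i j, ‖((G X) ^ (k + 1)) i j‖ ≤ C / s ^ (k + 1) := fun i j =>
      le_trans (Matrix.norm_entry_le_entrywise_sup_norm _) (key (k + 1))
    have hb := RW.specNormLe hn ((G X) ^ (k + 1)) hμk hent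
    rw [norm_pow] at hb
    have hspos : (0 : ℝ) < s ^ (k + 1) := by positivity
    have : (‖μ‖ * s) ^ (k + 1) ≤ (n : ℝ) * C := by
      rw [mul_pow]
      calc ‖μ‖ ^ (k + 1) * s ^ (k + 1) ≤ ((n : ℝ) * (C / s ^ (k + 1))) * s ^ (k + 1) :=
        mul_le_mul_of_nonneg_right hb hspos.le
        _ = (n : ℝ) * C := by field_simp
    linarith
  -- conclude
  refine RW.sRad_le hρ0 fun μ hμ => ?_
  by_contra hcon
  push_neg at hcon
  have hμ1 : ‖μ‖ < 1 := lt_of_le_of_lt (RW.norm_le_sRad hμ) (hmap hX)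
  set m : ℝ := (sRad X + ‖μ‖) / 2 with hm
  have hm0 : 0 < m := by
    have := norm_nonneg μ
    rw [hm]; nlinarith
  have hmlt : m < 1 := by rw [hm]; nlinarith
  have hmgt : sRad X < m := by rw [hm]; nlinarith
  have hmμ : m < ‖μ‖ := by rw [hm]; nlinarith
  have hs1 : 1 < m⁻¹ := (one_lt_inv₀ hm0).mpr hmlt
  have hsρ : m⁻¹ * sRad X < 1 := by
    have h1 : sRad X / m < 1 := (div_lt_one hm0).mpr hmgt
    rw [div_eq_mul_inv, mul_comm] at h1
    exact h1
  have hc2 := claim μ hμ m⁻¹ hs1 hsρ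
  rw [← div_eq_mul_inv, div_le_one hm0] at hc2
  linarith
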